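/- Let f₀ > 0, δ₀ > 0, and let F₁ : [0, δ₀) → ℝ be continuously differentiable with F₁(0) = 0, f₁ := F₁′(0) < 0, and f₀ + F₁(r) > 0 on [0, δ₀). Set λ = −f₁/(3f₀^{3/2}), fix κ with 0 < κ < λ, and define t_κ(r) = (2/3)f₀^{−1/2} + κr, t_c(r) = (2/3)(f₀ + F₁(r))^{−1/2}, and R(t,r) = r·(1 − t/t_c(r))^{2/3}. Then there exists δ > 0 such that for all r ∈ (0, δ): t_κ(r) < t_c(r) and ∂R/∂r(t_κ(r), r) + R(t_κ(r), r)/r < κ. -/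

import Mathlib

open Filter Set Topology


/-- Analytic core of Proposition 5: with `t_c(r) = (2/3)(f₀+F₁(r))^{-1/2}`,
`R(t,r) = r(1 - t/t_c(r))^{2/3}`, `f₁ = F₁'(0) < 0`, `λ = -f₁/(3f₀^{3/2})`
and `0 < κ < λ`, there is `δ > 0` such that for `0 < r < δ` the line
`t_κ(r) = (2/3)f₀^{-1/2} + κr` lies below `t_c`, and along it
`∂R/∂r + R/r < κ`. -/
theorem naked_singularity_geodesic_bound (f₀ δ₀ : ℝ)
    (hf₀ : 0 < f₀) (hδ₀ : 0 < δ₀) (F₁ : ℝ → ℝ)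
    (hF₁ : ContDiffOn ℝ 1 F₁ (Set.Ico 0 δ₀)) (hF₁0 : F₁ 0 = 0)
    (f₁ : ℝ) (hf₁def : derivWithin F₁ (Set.Ico 0 δ₀) 0 = f₁) (hf₁ : f₁ < 0)
    (hpos : ∀ r ∈ Set.Ico (0 : ℝ) δ₀, 0 < f₀ + F₁ r)
    (lam κ : ℝ) (hlam : lam = -f₁ / (3 * f₀ ^ ((3 : ℝ) / 2)))
    (hκ : 0 < κ) (hκlam : κ < lam)
    (t_κ t_c : ℝ → ℝ)
    (ht_κ : ∀ r, t_κ r = 2 / 3 * f₀ ^ (-(1 : ℝ) / 2) + κ * r)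
    (ht_c : ∀ r, t_c r = 2 / 3 * (f₀ + F₁ r) ^ (-(1 : ℝ) / 2))
    (R : ℝ → ℝ → ℝ)
    (hR : ∀ t r, R t r = r * (1 - t / t_c r) ^ ((2 : ℝ) / 3)) :
    ∃ δ > (0 : ℝ), ∀ r ∈ Set.Ioo (0 : ℝ) δ,
      t_κ r < t_c r ∧
      deriv (fun r' => R (t_κ r) r') r + R (t_κ r) r / r < κ := by
  have hsf₀ : (0:ℝ) < Real.sqrt f₀ := Real.sqrt_pos.mpr hf₀
  set l : Filter ℝ := 𝓝[>] (0:ℝ) with hl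
  set dg : ℝ → ℝ := fun r => derivWithin F₁ (Set.Ico 0 δ₀) r with hdgdef
  set s : ℝ → ℝ := fun r => Real.sqrt (f₀ + F₁ r) with hsdef
  set u : ℝ → ℝ := fun r => 1 - 3 * t_κ r / 2 * s r with hudef
  have hIooIco : Set.Ioo (0:ℝ) δ₀ ⊆ Set.Ico 0 δ₀ := Set.Ioo_subset_Ico_self
  have h0mem : (0:ℝ) ∈ Set.Ico (0:ℝ) δ₀ := ⟨le_refl _, hδ₀⟩
  have hnhds : 𝓝[Set.Ioo (0:ℝ) δ₀] 0 = l := nhdsWithin_Ioo_eq_nhdsGT hδ₀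
  have hlle : l ≤ 𝓝[Set.Ico (0:ℝ) δ₀] 0 := by
    rw [← hnhds]; exact nhdsWithin_mono 0 hIooIco
  -- differentiability at interior points
  have hF₁diff : ∀ r ∈ Set.Ioo (0:ℝ) δ₀, HasDerivAt F₁ (dg r) r := by
    intro r hr
    have hmem : Set.Ico (0:ℝ) δ₀ ∈ 𝓝 r :=
      Filter.mem_of_superset (Ioo_mem_nhds hr.1 hr.2) hIooIco
    have hd : DifferentiableWithinAt ℝ F₁ (Set.Ico 0 δ₀) r :=
      (hF₁.differentiableOn one_ne_zero) r (hIooIco hr)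
    have hd' : DifferentiableAt ℝ F₁ r := hd.differentiableAt hmem
    have heq : dg r = deriv F₁ r := derivWithin_of_mem_nhds hmem
    rw [heq]; exact hd'.hasDerivAt
  -- tendsto of dg
  have hdg0 : Filter.Tendsto dg l (𝓝 f₁) := by
    have hcont : ContinuousOn dg (Set.Ico 0 δ₀) :=
      hF₁.continuousOn_derivWithin (uniqueDiffOn_Ico 0 δ₀) le_rfl
    have h := (hcont 0 h0mem).tendsto
    have h0 : dg 0 = f₁ := hf₁def
    rw [h0] at h
    exact h.mono_left hlle
  -- tendsto of F₁ r / r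
  have hslope : Filter.Tendsto (fun r => F₁ r / r) l (𝓝 f₁) := by
    have hd : HasDerivWithinAt F₁ f₁ (Set.Ico 0 δ₀) 0 := by
      have := ((hF₁.differentiableOn one_ne_zero) 0 h0mem).hasDerivWithinAt
      rwa [hf₁def] at this
    have h1 := hasDerivWithinAt_iff_tendsto_slope.mp hd
    have hsub : l ≤ 𝓝[Set.Ico 0 δ₀ \ {0}] 0 := by
      rw [← hnhds]
      exact nhdsWithin_mono _ (fun x hx => ⟨hIooIco hx, ne_of_gt hx.1⟩)
    refine (h1.mono_left hsub).congr' ?_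
    filter_upwards [self_mem_nhdsWithin] with r hr
    simp [slope_def_field, hF₁0, div_eq_mul_inv]
  have hidl : Filter.Tendsto (fun r : ℝ => r) l (𝓝 0) :=
    Filter.tendsto_id.mono_right nhdsWithin_le_nhds
  have hF₁t : Filter.Tendsto F₁ l (𝓝 0) := by
    have h := hslope.mul hidl
    rw [mul_zero] at h
    refine h.congr' ?_
    filter_upwards [self_mem_nhdsWithin] with r hr
    exact div_mul_cancel₀ _ (ne_of_gt hr)
  have hgt : Filter.Tendsto (fun r => f₀ + F₁ r) l (𝓝 f₀) := by
    have := (tendsto_const_nhds (α := ℝ) (x := f₀) (f := l)).add hF₁t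
    rwa [add_zero] at this
  have hst : Filter.Tendsto s l (𝓝 (Real.sqrt f₀)) :=
    (Real.continuous_sqrt.tendsto f₀).comp hgt
  -- the constant c
  set c : ℝ := -f₁ / (2 * f₀) - 3 * κ / 2 * Real.sqrt f₀ with hcdef
  have hsfsq : Real.sqrt f₀ * Real.sqrt f₀ = f₀ := Real.mul_self_sqrt hf₀.le
  have hc0 : 0 < c := by
    have h32 : f₀ ^ ((3:ℝ)/2) = f₀ * Real.sqrt f₀ := by
      rw [show ((3:ℝ)/2) = (1:ℝ) + 1/2 by norm_num, Real.rpow_add hf₀,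
        Real.rpow_one, ← Real.sqrt_eq_rpow]
    rw [hlam, h32] at hκlam
    have hden : (0:ℝ) < 3 * (f₀ * Real.sqrt f₀) := by positivity
    have key : κ * (3 * (f₀ * Real.sqrt f₀)) < -f₁ := (lt_div_iff₀ hden).mp hκlam
    rw [hcdef, sub_pos, lt_div_iff₀ (by positivity : (0:ℝ) < 2 * f₀)]
    nlinarith [hsf₀, hf₀]
  -- t₀ basics
  have ht₀ : (2:ℝ) / 3 * f₀ ^ (-(1:ℝ)/2) = 2 / 3 * (Real.sqrt f₀)⁻¹ := by
    rw [show (-(1:ℝ)/2) = -(1/2 : ℝ) by norm_num, Real.rpow_neg hf₀.le,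
      ← Real.sqrt_eq_rpow]
  have ht_κt : Filter.Tendsto t_κ l (𝓝 (2 / 3 * (Real.sqrt f₀)⁻¹)) := by
    have : Filter.Tendsto (fun r : ℝ => 2 / 3 * f₀ ^ (-(1:ℝ)/2) + κ * r) l
        (𝓝 (2 / 3 * f₀ ^ (-(1:ℝ)/2) + κ * 0)) :=
      tendsto_const_nhds.add (hidl.const_mul κ)
    rw [mul_zero, add_zero] at this
    have h2 := this.congr (fun r => (ht_κ r).symm)
    rwa [ht₀] at h2
  -- tendsto of u r / r
  have hAt : Filter.Tendsto (fun r => u r / r) l (𝓝 c) := by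
    have h1 : Filter.Tendsto
        (fun r => -(F₁ r / r) / ((s r + Real.sqrt f₀) * Real.sqrt f₀) - 3 * κ / 2 * s r) l
        (𝓝 (-f₁ / ((Real.sqrt f₀ + Real.sqrt f₀) * Real.sqrt f₀) - 3 * κ / 2 * Real.sqrt f₀)) := by
      refine Filter.Tendsto.sub ?_ (hst.const_mul _)
      refine Filter.Tendsto.div hslope.neg ((hst.add tendsto_const_nhds).mul tendsto_const_nhds) ?_
      positivity
    have hval : -f₁ / ((Real.sqrt f₀ + Real.sqrt f₀) * Real.sqrt f₀) - 3 * κ / 2 * Real.sqrt f₀ = c := by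
      rw [hcdef]
      rw [show (Real.sqrt f₀ + Real.sqrt f₀) * Real.sqrt f₀
          = 2 * f₀ by rw [add_mul, hsfsq]; ring]
    rw [hval] at h1
    refine h1.congr' ?_
    filter_upwards [Filter.inter_mem (Ioo_mem_nhdsGT_of_mem ⟨le_refl _, hδ₀⟩) self_mem_nhdsWithin]
      with r hr
    obtain ⟨hrδ, hr0⟩ := hr
    have hgr : (0:ℝ) < f₀ + F₁ r := hpos r (hIooIco hrδ)
    have hsr : (0:ℝ) < s r := Real.sqrt_pos.mpr hgr
    have hssq : s r * s r = f₀ + F₁ r := Real.mul_self_sqrt hgr.le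
    have hrne : (r:ℝ) ≠ 0 := ne_of_gt hr0
    have hF₁r : F₁ r = s r * s r - Real.sqrt f₀ * Real.sqrt f₀ := by
      rw [hssq, hsfsq]; ring
    have key : u r = (-(F₁ r / r) / ((s r + Real.sqrt f₀) * Real.sqrt f₀)
        - 3 * κ / 2 * s r) * r := by
      simp only [hudef]
      rw [ht_κ r, ht₀, hF₁r]
      have hne1 : s r + Real.sqrt f₀ ≠ 0 := by positivity
      field_simp
      ring
    rw [key, mul_div_cancel_right₀ _ hrne]
  have hAev : ∀ᶠ r in l, 0 < u r / r := hAt.eventually (eventually_gt_nhds hc0)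
  -- tendsto of u, u^{2/3}
  have hu0 : Filter.Tendsto u l (𝓝 0) := by
    have h := hAt.mul hidl
    rw [mul_zero] at h
    refine h.congr' ?_
    filter_upwards [self_mem_nhdsWithin] with r hr
    exact div_mul_cancel₀ _ (ne_of_gt hr)
  have hrpow23 : ContinuousAt (fun x : ℝ => x ^ ((2:ℝ)/3)) 0 :=
    Real.continuousAt_rpow_const 0 _ (Or.inr (by norm_num))
  have hu23 : Filter.Tendsto (fun r => u r ^ ((2:ℝ)/3)) l (𝓝 0) := by
    have := hrpow23.tendsto.comp hu0
    rwa [Real.zero_rpow (by norm_num : ((2:ℝ)/3) ≠ 0)] at this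
  have hr23 : Filter.Tendsto (fun r : ℝ => r ^ ((2:ℝ)/3)) l (𝓝 0) := by
    have := hrpow23.tendsto.comp hidl
    rwa [Real.zero_rpow (by norm_num : ((2:ℝ)/3) ≠ 0)] at this
  have hAinv : Filter.Tendsto (fun r => (u r / r) ^ (-(1:ℝ)/3)) l (𝓝 (c ^ (-(1:ℝ)/3))) :=
    (Real.continuousAt_rpow_const c _ (Or.inl hc0.ne')).tendsto.comp hAt
  -- W and its limit
  set W : ℝ → ℝ := fun r => -(3 * t_κ r / 2 * (1 / (2 * s r) * dg r)) with hWdef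
  have hWt : Filter.Tendsto W l
      (𝓝 (-(3 * (2 / 3 * (Real.sqrt f₀)⁻¹) / 2 * (1 / (2 * Real.sqrt f₀) * f₁)))) := by
    refine Filter.Tendsto.neg ?_
    refine Filter.Tendsto.mul ?_ ?_
    · exact ((ht_κt.const_mul 3).div_const 2)
    · refine Filter.Tendsto.mul ?_ hdg0
      refine Filter.Tendsto.div tendsto_const_nhds (hst.const_mul 2) ?_
      positivity
  -- E and its limit
  set E : ℝ → ℝ := fun r =>
    2 * u r ^ ((2:ℝ)/3) + r * (2/3 * u r ^ (-(1:ℝ)/3) * W r) with hEdef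
  have hEt : Filter.Tendsto E l (𝓝 0) := by
    have hT : Filter.Tendsto (fun r => r * (2/3 * u r ^ (-(1:ℝ)/3) * W r)) l (𝓝 0) := by
      have h := (hr23.mul (hAinv.mul (hWt.const_mul (2/3))))
      rw [zero_mul] at h
      refine h.congr' ?_
      filter_upwards [hAev, self_mem_nhdsWithin] with r hA hr0
      have hr0' : (0:ℝ) < r := hr0
      have h1 : u r = (u r / r) * r := (div_mul_cancel₀ _ (ne_of_gt hr0')).symm
      have h2 : u r ^ (-(1:ℝ)/3) = (u r / r) ^ (-(1:ℝ)/3) * r ^ (-(1:ℝ)/3) := by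
        conv_lhs => rw [h1]
        exact Real.mul_rpow hA.le hr0'.le
      have h3 : r ^ ((2:ℝ)/3) = r * r ^ (-(1:ℝ)/3) := by
        nth_rewrite 2 [← Real.rpow_one r]
        rw [← Real.rpow_add hr0']; norm_num
      rw [h3, h2]; ring
    have := (hu23.const_mul 2).add hT
    rw [mul_zero, add_zero] at this
    exact this
  have hEev : ∀ᶠ r in l, E r < κ := hEt.eventually (eventually_lt_nhds hκ)
  -- assemble
  have hmain : ∀ᶠ r in l, t_κ r < t_c r ∧
      deriv (fun r' => R (t_κ r) r') r + R (t_κ r) r / r < κ := by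
    filter_upwards [Ioo_mem_nhdsGT_of_mem ⟨le_refl (0:ℝ), hδ₀⟩, hAev, hEev]
      with r hrδ hA hE
    have hr0 : (0:ℝ) < r := hrδ.1
    have hgr : (0:ℝ) < f₀ + F₁ r := hpos r (hIooIco hrδ)
    have hsr : (0:ℝ) < s r := Real.sqrt_pos.mpr hgr
    have hur : (0:ℝ) < u r := by
      have := mul_pos hA hr0
      rwa [div_mul_cancel₀ _ (ne_of_gt hr0)] at this
    -- t_c formula
    have htc : ∀ r' ∈ Set.Ico (0:ℝ) δ₀, t_c r' = 2 / 3 * (s r')⁻¹ := by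
      intro r' hr'
      rw [ht_c r', show (-(1:ℝ)/2) = -(1/2 : ℝ) by norm_num,
        Real.rpow_neg (hpos r' hr').le, ← Real.sqrt_eq_rpow]
    -- first conclusion
    have hconc1 : t_κ r < t_c r := by
      have h1 : 3 * t_κ r / 2 * s r < 1 := by
        have h := hur; simp only [hudef] at h; linarith
      rw [htc r (hIooIco hrδ)]
      rw [mul_comm, ← div_eq_inv_mul, lt_div_iff₀ hsr]
      nlinarith
    refine ⟨hconc1, ?_⟩
    -- derivative computation
    set t : ℝ := t_κ r with htdef
    have hF : HasDerivAt F₁ (dg r) r := hF₁diff r hrδ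
    have hgd : HasDerivAt (fun r' => f₀ + F₁ r') (dg r) r := hF.const_add f₀
    have hsd : HasDerivAt (fun r' => Real.sqrt (f₀ + F₁ r')) (1 / (2 * s r) * dg r) r :=
      (Real.hasDerivAt_sqrt (ne_of_gt hgr)).comp r hgd
    have hwd : HasDerivAt (fun r' => 1 - 3 * t / 2 * Real.sqrt (f₀ + F₁ r'))
        (-(3 * t / 2 * (1 / (2 * s r) * dg r))) r :=
      (hsd.const_mul (3 * t / 2)).const_sub 1
    have huval : (1 : ℝ) - 3 * t / 2 * Real.sqrt (f₀ + F₁ r) = u r := rfl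
    have hune : (1 : ℝ) - 3 * t / 2 * Real.sqrt (f₀ + F₁ r) ≠ 0 := by
      rw [huval]; exact hur.ne'
    have hpow : HasDerivAt (fun x : ℝ => x ^ ((2:ℝ)/3))
        ((2:ℝ)/3 * (1 - 3 * t / 2 * Real.sqrt (f₀ + F₁ r)) ^ ((2:ℝ)/3 - 1))
        (1 - 3 * t / 2 * Real.sqrt (f₀ + F₁ r)) :=
      Real.hasDerivAt_rpow_const (Or.inl hune)
    have hcomp : HasDerivAt (fun r' => (1 - 3 * t / 2 * Real.sqrt (f₀ + F₁ r')) ^ ((2:ℝ)/3))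
        ((2:ℝ)/3 * (1 - 3 * t / 2 * Real.sqrt (f₀ + F₁ r)) ^ ((2:ℝ)/3 - 1) *
          -(3 * t / 2 * (1 / (2 * s r) * dg r))) r :=
      by have := hpow.comp r hwd; exact this
    have hψ : HasDerivAt (fun r' => r' * (1 - 3 * t / 2 * Real.sqrt (f₀ + F₁ r')) ^ ((2:ℝ)/3))
        (1 * ((1 - 3 * t / 2 * Real.sqrt (f₀ + F₁ r)) ^ ((2:ℝ)/3)) +
          r * ((2:ℝ)/3 * (1 - 3 * t / 2 * Real.sqrt (f₀ + F₁ r)) ^ ((2:ℝ)/3 - 1) *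
            -(3 * t / 2 * (1 / (2 * s r) * dg r)))) r :=
      (hasDerivAt_id r).mul hcomp
    -- local equality of R(t,·) with ψ
    have hRev : (fun r' => R t r') =ᶠ[𝓝 r]
        (fun r' => r' * (1 - 3 * t / 2 * Real.sqrt (f₀ + F₁ r')) ^ ((2:ℝ)/3)) := by
      refine Filter.eventually_of_mem (Ioo_mem_nhds hrδ.1 hrδ.2) ?_
      intro r' hr'
      have hgr' : (0:ℝ) < f₀ + F₁ r' := hpos r' (hIooIco hr')
      have hsr' : (0:ℝ) < Real.sqrt (f₀ + F₁ r') := Real.sqrt_pos.mpr hgr'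
      have : t / t_c r' = 3 * t / 2 * Real.sqrt (f₀ + F₁ r') := by
        rw [htc r' (hIooIco hr')]
        have hs' : Real.sqrt (f₀ + F₁ r') ≠ 0 := ne_of_gt hsr'
        simp only [hsdef]
        field_simp
        try ring
      show R t r' = r' * (1 - 3 * t / 2 * Real.sqrt (f₀ + F₁ r')) ^ ((2:ℝ)/3)
      rw [hR t r', this]
    have hderiv : deriv (fun r' => R t r') r =
        1 * ((1 - 3 * t / 2 * Real.sqrt (f₀ + F₁ r)) ^ ((2:ℝ)/3)) +
          r * ((2:ℝ)/3 * (1 - 3 * t / 2 * Real.sqrt (f₀ + F₁ r)) ^ ((2:ℝ)/3 - 1) *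
            -(3 * t / 2 * (1 / (2 * s r) * dg r))) := by
      rw [hRev.deriv_eq]; exact hψ.deriv
    -- R t r / r
    have hRr : R t r / r = u r ^ ((2:ℝ)/3) := by
      have : t / t_c r = 3 * t / 2 * Real.sqrt (f₀ + F₁ r) := by
        rw [htc r (hIooIco hrδ)]
        have hs' : Real.sqrt (f₀ + F₁ r) ≠ 0 := ne_of_gt hsr
        simp only [hsdef]
        field_simp
        try ring
      rw [hR t r, this, huval, mul_div_cancel_left₀ _ (ne_of_gt hr0)]
    rw [hderiv, hRr, huval]
    have hfin : 1 * u r ^ ((2:ℝ)/3) +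
        r * ((2:ℝ)/3 * u r ^ ((2:ℝ)/3 - 1) * -(3 * t / 2 * (1 / (2 * s r) * dg r))) +
        u r ^ ((2:ℝ)/3) = E r := by
      simp only [hEdef, hWdef]
      rw [show ((2:ℝ)/3 - 1) = -(1:ℝ)/3 by norm_num]
      ring
    rw [hfin]
    exact hE
  rcases mem_nhdsGT_iff_exists_Ioo_subset.mp hmain with ⟨δ, hδ, hsub⟩
  exact ⟨δ, hδ, fun r hr => hsub hr⟩
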